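/- Let I ⊆ ℝ be an open interval, g > 0, and let h, u, α₁, α₂, b : I → ℝ be differentiable with h(x) > 0 and u(x) ≠ 0 for all x ∈ I. Then the frictionless steady SWLME2 equations hold on I — namely (h u)′ = 0, (h u^2 + g h^2/2 + (1/3) h α₁^2 + (1/5) h α₂^2)′ + g h b′ = 0, and (2 h u α_i)′ = u (h α_i)′ for i = 1, 2 — if and only if the four functions h u, (1/2) u^2 + g (h + b) + (1/2) α₁^2 + (3/10) α₂^2, α₁/h, and α₂/h are constant on I. -/

import Mathlib

open Set

lemma aux_const_of_deriv_zero (I : Set ℝ) (hIopen : IsOpen I) (hIconn : Convex ℝ I)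
    (f : ℝ → ℝ) (hf : ∀ x ∈ I, DifferentiableAt ℝ f x)
    (hf' : ∀ x ∈ I, deriv f x = 0) : ∃ c, ∀ x ∈ I, f x = c := by
  rcases I.eq_empty_or_nonempty with rfl | ⟨x₀, hx₀⟩
  · exact ⟨0, by simp⟩
  refine ⟨f x₀, fun x hx => ?_⟩
  apply hIconn.is_const_of_fderivWithin_eq_zero
    (fun y hy => (hf y hy).differentiableWithinAt) ?_ hx hx₀
  intro y hy
  rw [fderivWithin_of_isOpen hIopen hy]
  have h0 : HasDerivAt f 0 y := by
    simpa [hf' y hy] using (hf y hy).hasDerivAt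
  have := h0.hasFDerivAt.fderiv
  rw [this]; ext; simp

/-- Characterization of the frictionless smooth steady states of the SWLME2 model:
on an open interval with `h > 0` and `u ≠ 0`, the steady equations
`(h u)' = 0`, `(h u² + g h²/2 + (1/3) h α₁² + (1/5) h α₂²)' + g h b' = 0` and
`(2 h u αᵢ)' = u (h αᵢ)'` (i = 1,2) hold if and only if `h u`,
`(1/2) u² + g (h + b) + (1/2) α₁² + (3/10) α₂²`, `α₁/h` and `α₂/h` are constant. -/
theorem swlme2_steady_state_characterization
    (I : Set ℝ) (hIopen : IsOpen I) (hIconn : Convex ℝ I)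
    (g : ℝ) (hg : 0 < g) (h u α₁ α₂ b : ℝ → ℝ)
    (hh : ∀ x ∈ I, DifferentiableAt ℝ h x)
    (hu : ∀ x ∈ I, DifferentiableAt ℝ u x)
    (hα₁ : ∀ x ∈ I, DifferentiableAt ℝ α₁ x)
    (hα₂ : ∀ x ∈ I, DifferentiableAt ℝ α₂ x)
    (hb : ∀ x ∈ I, DifferentiableAt ℝ b x)
    (hpos : ∀ x ∈ I, 0 < h x)
    (hune : ∀ x ∈ I, u x ≠ 0) :
    ((∀ x ∈ I, deriv (fun y => h y * u y) x = 0) ∧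
     (∀ x ∈ I, deriv (fun y => h y * u y ^ 2 + g * h y ^ 2 / 2
         + (1 / 3) * h y * α₁ y ^ 2 + (1 / 5) * h y * α₂ y ^ 2) x
       + g * h x * deriv b x = 0) ∧
     (∀ x ∈ I, deriv (fun y => 2 * h y * u y * α₁ y) x
       = u x * deriv (fun y => h y * α₁ y) x) ∧
     (∀ x ∈ I, deriv (fun y => 2 * h y * u y * α₂ y) x
       = u x * deriv (fun y => h y * α₂ y) x))
    ↔
    ((∃ c₁, ∀ x ∈ I, h x * u x = c₁) ∧
     (∃ c₂, ∀ x ∈ I, (1 / 2) * u x ^ 2 + g * (h x + b x)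
        + (1 / 2) * α₁ x ^ 2 + (3 / 10) * α₂ x ^ 2 = c₂) ∧
     (∃ c₃, ∀ x ∈ I, α₁ x / h x = c₃) ∧
     (∃ c₄, ∀ x ∈ I, α₂ x / h x = c₄)) := by
  constructor
  · rintro ⟨e1, e2, e3, e4⟩
    -- key pointwise relations
    have key1 : ∀ x ∈ I, deriv h x * u x + h x * deriv u x = 0 := by
      intro x hx
      have := ((hh x hx).hasDerivAt.mul (hu x hx).hasDerivAt).deriv
      rw [← this]; exact e1 x hx
    have keyA : ∀ x ∈ I, h x * deriv α₁ x - deriv h x * α₁ x = 0 := by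
      intro x hx
      have Hh := (hh x hx).hasDerivAt; have Hu := (hu x hx).hasDerivAt
      have Ha := (hα₁ x hx).hasDerivAt
      have dL := (((Hh.const_mul (2:ℝ)).mul Hu).mul Ha).deriv
      have dR := (Hh.mul Ha).deriv
      have d3 := e3 x hx
      erw [dL, dR] at d3
      have h0 : u x * (h x * deriv α₁ x - deriv h x * α₁ x) = 0 := by
        simp only [Pi.mul_apply] at d3
        linear_combination d3 - 2 * α₁ x * key1 x hx
      rcases mul_eq_zero.1 h0 with h' | h'
      · exact absurd h' (hune x hx)
      · exact h'
    have keyB : ∀ x ∈ I, h x * deriv α₂ x - deriv h x * α₂ x = 0 := by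
      intro x hx
      have Hh := (hh x hx).hasDerivAt; have Hu := (hu x hx).hasDerivAt
      have Ha := (hα₂ x hx).hasDerivAt
      have dL := (((Hh.const_mul (2:ℝ)).mul Hu).mul Ha).deriv
      have dR := (Hh.mul Ha).deriv
      have d3 := e4 x hx
      erw [dL, dR] at d3
      have h0 : u x * (h x * deriv α₂ x - deriv h x * α₂ x) = 0 := by
        simp only [Pi.mul_apply] at d3
        linear_combination d3 - 2 * α₂ x * key1 x hx
      rcases mul_eq_zero.1 h0 with h' | h'
      · exact absurd h' (hune x hx)
      · exact h'
    refine ⟨?_, ?_, ?_, ?_⟩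
    · exact aux_const_of_deriv_zero I hIopen hIconn _
        (fun x hx => (hh x hx).mul (hu x hx)) e1
    · apply aux_const_of_deriv_zero I hIopen hIconn
      · intro x hx
        exact ((((hu x hx).pow 2).const_mul (1/2)).add
          (((hh x hx).add (hb x hx)).const_mul g)).add
          (((hα₁ x hx).pow 2).const_mul (1/2)) |>.add
          (((hα₂ x hx).pow 2).const_mul (3/10))
      · intro x hx
        have Hh := (hh x hx).hasDerivAt; have Hu := (hu x hx).hasDerivAt
        have Ha1 := (hα₁ x hx).hasDerivAt; have Ha2 := (hα₂ x hx).hasDerivAt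
        have Hb := (hb x hx).hasDerivAt
        have R := ((((Hu.pow 2).const_mul ((1:ℝ)/2)).add
          ((Hh.add Hb).const_mul g)).add
          ((Ha1.pow 2).const_mul ((1:ℝ)/2))).add
          ((Ha2.pow 2).const_mul ((3:ℝ)/10))
        erw [R.deriv]
        -- expand the flux derivative
        have Q := (((Hh.mul (Hu.pow 2)).add
          (((Hh.pow 2).const_mul g).div_const 2)).add
          ((Hh.const_mul ((1:ℝ)/3)).mul (Ha1.pow 2))).add
          ((Hh.const_mul ((1:ℝ)/5)).mul (Ha2.pow 2))
        have d2 := e2 x hx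
        erw [Q.deriv] at d2
        have hne := (hpos x hx).ne'
        have hmul : h x * ((1/2 : ℝ) * (↑2 * u x ^ 1 * deriv u x) +
            g * (deriv h x + deriv b x) +
            (1/2 : ℝ) * (↑2 * α₁ x ^ 1 * deriv α₁ x) +
            (3/10 : ℝ) * (↑2 * α₂ x ^ 1 * deriv α₂ x)) = 0 := by
          simp only [Pi.pow_apply] at d2
          linear_combination d2 - u x * key1 x hx + (1/3) * α₁ x * keyA x hx
            + (1/5) * α₂ x * keyB x hx
        have := mul_eq_zero.1 hmul
        rcases this with h' | h'
        · exact absurd h' hne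
        · linear_combination h'
    · apply aux_const_of_deriv_zero I hIopen hIconn
      · exact fun x hx => (hα₁ x hx).div (hh x hx) (hpos x hx).ne'
      · intro x hx
        have Hh := (hh x hx).hasDerivAt; have Ha := (hα₁ x hx).hasDerivAt
        erw [(Ha.div Hh (hpos x hx).ne').deriv, div_eq_zero_iff]
        left; linear_combination keyA x hx
    · apply aux_const_of_deriv_zero I hIopen hIconn
      · exact fun x hx => (hα₂ x hx).div (hh x hx) (hpos x hx).ne'
      · intro x hx
        have Hh := (hh x hx).hasDerivAt; have Ha := (hα₂ x hx).hasDerivAt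
        erw [(Ha.div Hh (hpos x hx).ne').deriv, div_eq_zero_iff]
        left; linear_combination keyB x hx
  · rintro ⟨⟨c₁, hc1⟩, ⟨c₂, hc2⟩, ⟨c₃, hc3⟩, ⟨c₄, hc4⟩⟩
    have keyA : ∀ x ∈ I, α₁ x = c₃ * h x := fun x hx =>
      (div_eq_iff (hpos x hx).ne').1 (hc3 x hx)
    have keyB : ∀ x ∈ I, α₂ x = c₄ * h x := fun x hx =>
      (div_eq_iff (hpos x hx).ne').1 (hc4 x hx)
    have dA : ∀ x ∈ I, deriv α₁ x = c₃ * deriv h x := by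
      intro x hx
      have ev : α₁ =ᶠ[nhds x] fun y => c₃ * h y :=
        Filter.eventuallyEq_of_mem (hIopen.mem_nhds hx) (fun y hy => keyA y hy)
      rw [ev.deriv_eq, deriv_const_mul _ (hh x hx)]
    have dB : ∀ x ∈ I, deriv α₂ x = c₄ * deriv h x := by
      intro x hx
      have ev : α₂ =ᶠ[nhds x] fun y => c₄ * h y :=
        Filter.eventuallyEq_of_mem (hIopen.mem_nhds hx) (fun y hy => keyB y hy)
      rw [ev.deriv_eq, deriv_const_mul _ (hh x hx)]
    have key1 : ∀ x ∈ I, deriv h x * u x + h x * deriv u x = 0 := by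
      intro x hx
      have ev : (fun y => h y * u y) =ᶠ[nhds x] fun _ => c₁ :=
        Filter.eventuallyEq_of_mem (hIopen.mem_nhds hx) (fun y hy => hc1 y hy)
      have := ((hh x hx).hasDerivAt.mul (hu x hx).hasDerivAt).deriv
      erw [← this, ev.deriv_eq, deriv_const]
    have key2 : ∀ x ∈ I,
        (1/2 : ℝ) * (↑2 * u x ^ 1 * deriv u x) + g * (deriv h x + deriv b x) +
        (1/2 : ℝ) * (↑2 * α₁ x ^ 1 * deriv α₁ x) +
        (3/10 : ℝ) * (↑2 * α₂ x ^ 1 * deriv α₂ x) = 0 := by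
      intro x hx
      have Hh := (hh x hx).hasDerivAt; have Hu := (hu x hx).hasDerivAt
      have Ha1 := (hα₁ x hx).hasDerivAt; have Ha2 := (hα₂ x hx).hasDerivAt
      have Hb := (hb x hx).hasDerivAt
      have R := ((((Hu.pow 2).const_mul ((1:ℝ)/2)).add
        ((Hh.add Hb).const_mul g)).add
        ((Ha1.pow 2).const_mul ((1:ℝ)/2))).add
        ((Ha2.pow 2).const_mul ((3:ℝ)/10))
      have ev : (fun y => (1/2 : ℝ) * u y ^ 2 + g * (h y + b y) +
          (1/2 : ℝ) * α₁ y ^ 2 + (3/10 : ℝ) * α₂ y ^ 2) =ᶠ[nhds x] fun _ => c₂ :=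
        Filter.eventuallyEq_of_mem (hIopen.mem_nhds hx) (fun y hy => hc2 y hy)
      have := R.deriv
      erw [ev.deriv_eq, deriv_const] at this
      linear_combination -this
    refine ⟨?_, ?_, ?_, ?_⟩
    · intro x hx
      erw [((hh x hx).hasDerivAt.mul (hu x hx).hasDerivAt).deriv]
      exact key1 x hx
    · intro x hx
      have Hh := (hh x hx).hasDerivAt; have Hu := (hu x hx).hasDerivAt
      have Ha1 := (hα₁ x hx).hasDerivAt; have Ha2 := (hα₂ x hx).hasDerivAt
      have Q := (((Hh.mul (Hu.pow 2)).add
        (((Hh.pow 2).const_mul g).div_const 2)).add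
        ((Hh.const_mul ((1:ℝ)/3)).mul (Ha1.pow 2))).add
        ((Hh.const_mul ((1:ℝ)/5)).mul (Ha2.pow 2))
      erw [Q.deriv]
      have e2 := key2 x hx
      rw [dA x hx, dB x hx, keyA x hx, keyB x hx] at e2
      simp only [Pi.pow_apply]
      rw [dA x hx, dB x hx, keyA x hx, keyB x hx]
      linear_combination h x * e2 + u x * key1 x hx
    · intro x hx
      have Hh := (hh x hx).hasDerivAt; have Hu := (hu x hx).hasDerivAt
      have Ha := (hα₁ x hx).hasDerivAt
      erw [(((Hh.const_mul (2:ℝ)).mul Hu).mul Ha).deriv, (Hh.mul Ha).deriv,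
        dA x hx, keyA x hx]
      simp only [Pi.mul_apply]
      linear_combination 2 * (c₃ * h x) * key1 x hx
    · intro x hx
      have Hh := (hh x hx).hasDerivAt; have Hu := (hu x hx).hasDerivAt
      have Ha := (hα₂ x hx).hasDerivAt
      erw [(((Hh.const_mul (2:ℝ)).mul Hu).mul Ha).deriv, (Hh.mul Ha).deriv,
        dB x hx, keyB x hx]
      simp only [Pi.mul_apply]
      linear_combination 2 * (c₄ * h x) * key1 x hx
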